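/- Let q be an odd prime power. The map f(x) = x + γ·Tr(x² − x^{q+1}) over F_{q²} is a permutation of F_{q²} if and only if γ ∈ F_q. -/

import Mathlib

theorem stmt_16 (p m : ℕ) (hp : p.Prime) (hp2 : p ≠ 2) (hm : 0 < m)
    (F : Type*) [Field F] [Fintype F] (hF : Fintype.card F = (p ^ m) ^ 2)
    (γ : F) :
    Function.Bijective (fun x : F =>
        x + γ * ((x ^ 2 - x ^ (p ^ m + 1)) + (x ^ 2 - x ^ (p ^ m + 1)) ^ p ^ m)) ↔
      γ ^ p ^ m = γ := by
  haveI := Fact.mk hp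
  -- char F = p
  haveI hchar : CharP F p := by
    have hr : CharP F (ringChar F) := ringChar.charP F
    obtain ⟨n, hrp, hcard⟩ := FiniteField.card F (ringChar F)
    have hdvd : p ∣ ringChar F ^ (n : ℕ) := by
      rw [← hcard, hF, ← pow_mul]
      exact dvd_pow_self p (by positivity)
    have : p = ringChar F := ((Nat.prime_dvd_prime_iff_eq hp hrp).mp
      (hp.dvd_of_dvd_pow hdvd))
    rwa [this]
  have frob_add0 : ∀ a b : F, (a + b) ^ p ^ m = a ^ p ^ m + b ^ p ^ m := fun a b =>
    add_pow_char_pow ..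
  have frob_sub0 : ∀ a b : F, (a - b) ^ p ^ m = a ^ p ^ m - b ^ p ^ m := fun a b =>
    sub_pow_char_pow ..
  have hodd0 : Odd (p ^ m) := Odd.pow (hp.odd_of_ne_two hp2)
  set q := p ^ m with hq
  clear_value q
  have hq2 : 2 ≤ q := by
    rw [hq]
    exact hp.two_le.trans (Nat.le_self_pow hm.ne' p)
  have frob_add : ∀ a b : F, (a + b) ^ q = a ^ q + b ^ q := frob_add0
  have frob_sub : ∀ a b : F, (a - b) ^ q = a ^ q - b ^ q := frob_sub0
  have hodd : Odd q := hodd0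
  have hqq : ∀ x : F, (x ^ q) ^ q = x := by
    intro x
    have h := FiniteField.pow_card x
    rw [hF, pow_two, pow_mul] at h
    exact h
  have sqpow : ∀ u : F, (u ^ 2) ^ q = (u ^ q) ^ 2 := fun u => by
    rw [← pow_mul, mul_comm, pow_mul]
  have h2F : (2 : F) ≠ 0 := by
    intro h
    have := (CharP.cast_eq_zero_iff F p 2).mp (by exact_mod_cast h)
    exact hp2 ((Nat.prime_dvd_prime_iff_eq hp Nat.prime_two).mp this)
  have frob2 : (2 : F) ^ q = 2 := by
    have h12 : (1 : F) + 1 = 2 := one_add_one_eq_two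
    rw [← h12, frob_add]
    simp
  -- rewrite f
  have key : (fun x : F =>
      x + γ * ((x ^ 2 - x ^ (q + 1)) + (x ^ 2 - x ^ (q + 1)) ^ q)) =
      fun x : F => x + γ * (x - x ^ q) ^ 2 := by
    funext x
    have h1 : (x ^ 2 - x ^ (q + 1)) ^ q = (x ^ q) ^ 2 - x * x ^ q := by
      rw [frob_sub, sqpow]
      congr 1
      rw [← pow_mul, add_mul, one_mul, pow_add, pow_mul, hqq]
    rw [h1, pow_succ]
    ring
  rw [key]
  constructor
  · -- bijective → γ ^ q = γ
    intro hbij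
    by_contra hne
    have hε : γ - γ ^ q ≠ 0 := sub_ne_zero.mpr fun h => hne h.symm
    -- find δ ≠ 0 with δ^q = -δ
    obtain ⟨δ, hδ0, hδq⟩ : ∃ δ : F, δ ≠ 0 ∧ δ ^ q = -δ := by
      by_contra hno
      push_neg at hno
      have hinj : Function.Injective (fun z : F => z ^ q + z) := by
        intro z w hzw
        simp only at hzw
        by_contra hne'
        refine hno (z - w) (sub_ne_zero.mpr hne') ?_
        rw [frob_sub]
        linear_combination hzw
      have hsurj := Finite.injective_iff_surjective.mp hinj
      have hz : ∃ z : F, z ^ q ≠ z := by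
        by_contra hall
        push_neg at hall
        have hP : (Polynomial.X ^ q - Polynomial.X : Polynomial F) ≠ 0 := by
          intro h
          have h' := congrArg Polynomial.natDegree (sub_eq_zero.mp h)
          rw [Polynomial.natDegree_X_pow, Polynomial.natDegree_X] at h'
          omega
        have hsub : (Finset.univ : Finset F).val ⊆
            (Polynomial.X ^ q - Polynomial.X : Polynomial F).roots := by
          intro z _
          rw [Polynomial.mem_roots hP]
          simp [Polynomial.IsRoot, hall z]
        have hle := Polynomial.card_le_degree_of_subset_roots hsub
        rw [Finset.card_univ, Polynomial.natDegree_sub_eq_left_of_natDegree_lt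
          (by rw [Polynomial.natDegree_X_pow, Polynomial.natDegree_X]; omega),
          Polynomial.natDegree_X_pow] at hle
        have hlt : q < Fintype.card F := by rw [hF]; nlinarith
        omega
      obtain ⟨z, hz⟩ := hz
      obtain ⟨w, hw⟩ := hsurj z
      simp only at hw
      apply hz
      calc z ^ q = (w ^ q + w) ^ q := by rw [hw]
        _ = w + w ^ q := by rw [frob_add, hqq]
        _ = z := by rw [← hw]; ring
    -- build a collision with 0
    obtain ⟨b, hb⟩ : ∃ b : F, b = -(2 * δ * (γ - γ ^ q))⁻¹ := ⟨_, rfl⟩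
    have hd : (2 : F) * δ * (γ - γ ^ q) ≠ 0 := mul_ne_zero (mul_ne_zero h2F hδ0) hε
    have hb0 : b ≠ 0 := by
      rw [hb]
      exact neg_ne_zero.mpr (inv_ne_zero hd)
    have hbrel : 2 * δ * (γ - γ ^ q) * b = -1 := by
      rw [hb]
      field_simp
    have hγqq : (γ ^ q) ^ q = γ := hqq γ
    have hbq : b ^ q = b := by
      rw [hb, hodd.neg_pow, inv_pow, mul_pow, mul_pow, frob2, hδq, frob_sub, hγqq]
      have : (2 : F) * -δ * (γ ^ q - γ) = 2 * δ * (γ - γ ^ q) := by ring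
      rw [this]
    obtain ⟨a, ha⟩ : ∃ a : F, a = -(2 * δ ^ 2 * b ^ 2 * (γ + γ ^ q)) := ⟨_, rfl⟩
    have haq : a ^ q = a := by
      rw [ha, hodd.neg_pow, mul_pow, mul_pow, mul_pow, frob2, sqpow, sqpow, hδq, hbq,
        frob_add, hγqq]
      ring
    obtain ⟨x, hx⟩ : ∃ x : F, x = a + δ * b := ⟨_, rfl⟩
    have hxq : x ^ q = a - δ * b := by
      rw [hx, frob_add, mul_pow, haq, hδq, hbq]
      ring
    have hx0 : x ≠ 0 := by
      intro h
      have h' : x ^ q = 0 := by rw [h, zero_pow (by omega : q ≠ 0)]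
      rw [hxq] at h'
      rw [hx] at h
      have hδb : δ * b = 0 := by
        have h2' : 2 * (δ * b) = 0 := by linear_combination h - h'
        rcases mul_eq_zero.mp h2' with h'' | h''
        · exact absurd h'' h2F
        · exact h''
      rcases mul_eq_zero.mp hδb with h'' | h''
      · exact hδ0 h''
      · exact hb0 h''
    have hcol : x + γ * (x - x ^ q) ^ 2 = 0 := by
      rw [hxq, hx, ha]
      linear_combination (δ * b) * hbrel
    have h0 : (0 : F) + γ * ((0 : F) - (0 : F) ^ q) ^ 2 = 0 := by
      rw [zero_pow (by omega : q ≠ 0)]; ring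
    have := hbij.injective (a₁ := x) (a₂ := 0) (by
      show x + γ * (x - x ^ q) ^ 2 = 0 + γ * ((0 : F) - (0 : F) ^ q) ^ 2
      rw [hcol, h0])
    exact hx0 this
  · -- γ ^ q = γ → bijective
    intro hγ
    rw [← Finite.injective_iff_bijective]
    intro x y hxy
    simp only at hxy
    have hux : (x - x ^ q) ^ q = -(x - x ^ q) := by rw [frob_sub, hqq]; ring
    have huy : (y - y ^ q) ^ q = -(y - y ^ q) := by rw [frob_sub, hqq]; ring
    have h1 : x ^ q + γ * (x - x ^ q) ^ 2 = y ^ q + γ * (y - y ^ q) ^ 2 := by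
      have h := congrArg (· ^ q) hxy
      rw [frob_add, frob_add, mul_pow, mul_pow, hγ, sqpow, sqpow, hux, huy,
        neg_sq, neg_sq] at h
      exact h
    have h2 : x - x ^ q = y - y ^ q := by linear_combination hxy - h1
    rw [h2] at hxy
    exact add_right_cancel hxy
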